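/- Let N ≥ 1 and s ∈ (1/2,1). If u ∈ C(ℝ^N) ∩ L¹_{2s}(ℝ^N) is a viscosity supersolution of 𝓘_N^- u = 0 in ℝ^N (i.e. 𝓘_N^- u ≤ 0 in the viscosity sense) and u attains its global minimum at some point x₀ ∈ ℝ^N, then u is constant. -/

import Mathlib

open MeasureTheory Real Set

noncomputable section

abbrev E (N : ℕ) := EuclideanSpace ℝ (Fin N)

/-- The one-dimensional directional fractional operator `𝓘_ξ u(x)`. -/
noncomputable def Iop (N : ℕ) (s Cs : ℝ) (u : E N → ℝ) (ξ x : E N) : ℝ :=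
  Cs * ∫ τ in Ioi (0:ℝ), (u (x + τ • ξ) + u (x - τ • ξ) - 2 * u x) * τ ^ (-(1 + 2*s))

/-- `u ∈ L¹_{2s}(ℝ^N)`. -/
def MemL1s (N : ℕ) (s : ℝ) (u : E N → ℝ) : Prop :=
  ∀ x ξ : E N, ‖ξ‖ = 1 →
    IntegrableOn (fun τ => (|u (x + τ • ξ)| + |u (x - τ • ξ)|) / (1 + τ ^ (1 + 2*s)))
      (Ioi (0:ℝ))

/-- Evaluation of `𝓘_ξ` at `x` with a test function `φ` near `x` (within distance `δ`)
and `u` itself far away. -/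
noncomputable def ItestEval (N : ℕ) (s Cs δ : ℝ) (u φ : E N → ℝ) (ξ x : E N) : ℝ :=
  Cs * ∫ τ in Ioo (0:ℝ) δ, (φ (x + τ • ξ) + φ (x - τ • ξ) - 2 * φ x) * τ ^ (-(1 + 2*s)) +
  Cs * ∫ τ in Ioi δ, (u (x + τ • ξ) + u (x - τ • ξ) - 2 * u x) * τ ^ (-(1 + 2*s))

/-- `u` is a viscosity supersolution of `𝓘_k^- u + f(u) = 0` in `ℝ^N`. -/
def IsSupersolMinus (N k : ℕ) (s Cs : ℝ) (f : ℝ → ℝ) (u : E N → ℝ) : Prop :=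
  ∀ x₀ : E N, ∀ δ > (0:ℝ), ∀ φ : E N → ℝ,
    ContDiffOn ℝ 2 φ (Metric.ball x₀ δ) →
    (∀ y ∈ Metric.ball x₀ δ, u x₀ - φ x₀ ≤ u y - φ y) →
    (⨅ ξ : {ξ : Fin k → E N // Orthonormal ℝ ξ},
        ∑ i, ItestEval N s Cs δ u φ (ξ.1 i) x₀) + f (u x₀) ≤ 0

/-- `u` is a viscosity supersolution of `𝓘_k^+ u + f(u) = 0` in `ℝ^N`. -/
def IsSupersolPlus (N k : ℕ) (s Cs : ℝ) (f : ℝ → ℝ) (u : E N → ℝ) : Prop :=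
  ∀ x₀ : E N, ∀ δ > (0:ℝ), ∀ φ : E N → ℝ,
    ContDiffOn ℝ 2 φ (Metric.ball x₀ δ) →
    (∀ y ∈ Metric.ball x₀ δ, u x₀ - φ x₀ ≤ u y - φ y) →
    (⨆ ξ : {ξ : Fin k → E N // Orthonormal ℝ ξ},
        ∑ i, ItestEval N s Cs δ u φ (ξ.1 i) x₀) + f (u x₀) ≤ 0

lemma aux_integrable (N : ℕ) {s : ℝ} (hs : s ∈ Ioo (1/2 : ℝ) 1)
    {u : E N → ℝ} (hcont : Continuous u) (hL1 : MemL1s N s u)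
    (a ξ : E N) (hξ : ‖ξ‖ = 1) (m : ℝ) {δ : ℝ} (hδ : 0 < δ) :
    IntegrableOn (fun τ => (u (a + τ • ξ) + u (a - τ • ξ) - 2*m) * τ ^ (-(1+2*s))) (Ioi δ) := by
  have hq : (1:ℝ) < 1 + 2*s := by linarith [hs.1]
  have hD : IntegrableOn
      (fun τ => (|u (a + τ • ξ)| + |u (a - τ • ξ)|) / (1 + τ ^ (1 + 2*s))) (Ioi δ) :=
    (hL1 a ξ hξ).mono_set (Ioi_subset_Ioi hδ.le)
  have hPow : IntegrableOn (fun τ : ℝ => τ ^ (-(1+2*s))) (Ioi δ) :=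
    integrableOn_Ioi_rpow_of_lt (by linarith) hδ
  set C : ℝ := δ ^ (-(1+2*s)) + 1 with hC
  have hG : IntegrableOn (fun τ =>
      C * ((|u (a + τ • ξ)| + |u (a - τ • ξ)|) / (1 + τ ^ (1 + 2*s)))
        + (2*|m|) * τ ^ (-(1+2*s))) (Ioi δ) :=
    (hD.const_mul C).add (hPow.const_mul (2*|m|))
  have hmeas : AEStronglyMeasurable
      (fun τ => (u (a + τ • ξ) + u (a - τ • ξ) - 2*m) * τ ^ (-(1+2*s)))
      (volume.restrict (Ioi δ)) := by
    apply ContinuousOn.aestronglyMeasurable _ measurableSet_Ioi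
    intro τ hτ
    have hτ0 : 0 < τ := lt_trans hδ hτ
    have h1 : ContinuousWithinAt (fun τ : ℝ => u (a + τ • ξ) + u (a - τ • ξ) - 2*m) (Ioi δ) τ := by
      apply Continuous.continuousWithinAt
      exact ((hcont.comp (continuous_const.add ((continuous_id.smul continuous_const)))).add
        (hcont.comp (continuous_const.sub ((continuous_id.smul continuous_const))))).sub
        continuous_const
    exact h1.mul ((Real.continuousAt_rpow_const τ _ (Or.inl hτ0.ne')).continuousWithinAt)
  apply Integrable.mono' hG hmeas
  rw [ae_restrict_iff' measurableSet_Ioi]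
  refine ae_of_all _ (fun τ hτ => ?_)
  have hτδ : δ < τ := hτ
  have hτ0 : 0 < τ := lt_trans hδ hτδ
  have hp0 : (0:ℝ) ≤ τ ^ (-(1+2*s)) := Real.rpow_nonneg hτ0.le _
  have hq0 : (0:ℝ) < 1 + τ ^ (1+2*s) := by positivity
  have key : τ ^ (-(1+2*s)) ≤ C / (1 + τ ^ (1+2*s)) := by
    rw [le_div_iff₀ hq0]
    have h1 : τ ^ (-(1+2*s)) * τ ^ (1+2*s) = 1 := by
      rw [← Real.rpow_add hτ0, show -(1+2*s)+(1+2*s) = 0 by ring, Real.rpow_zero]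
    have h2 : τ ^ (-(1+2*s)) ≤ δ ^ (-(1+2*s)) :=
      Real.rpow_le_rpow_of_nonpos hδ hτδ.le (by linarith)
    calc τ ^ (-(1+2*s)) * (1 + τ ^ (1+2*s))
        = τ ^ (-(1+2*s)) + τ ^ (-(1+2*s)) * τ ^ (1+2*s) := by ring
      _ = τ ^ (-(1+2*s)) + 1 := by rw [h1]
      _ ≤ C := by rw [hC]; linarith
  have habs : |u (a + τ • ξ) + u (a - τ • ξ) - 2*m|
      ≤ |u (a + τ • ξ)| + |u (a - τ • ξ)| + 2*|m| := by
    have := le_abs_self (u (a + τ • ξ)); have := neg_abs_le (u (a + τ • ξ))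
    have := le_abs_self (u (a - τ • ξ)); have := neg_abs_le (u (a - τ • ξ))
    have := le_abs_self m; have := neg_abs_le m
    rw [abs_le]; constructor <;> linarith
  have hA0 : (0:ℝ) ≤ |u (a + τ • ξ)| + |u (a - τ • ξ)| := by positivity
  calc ‖(u (a + τ • ξ) + u (a - τ • ξ) - 2*m) * τ ^ (-(1+2*s))‖
      = |u (a + τ • ξ) + u (a - τ • ξ) - 2*m| * τ ^ (-(1+2*s)) := by
        rw [norm_mul, Real.norm_eq_abs, Real.norm_eq_abs, abs_of_nonneg hp0]
    _ ≤ (|u (a + τ • ξ)| + |u (a - τ • ξ)| + 2*|m|) * τ ^ (-(1+2*s)) :=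
        mul_le_mul_of_nonneg_right habs hp0
    _ = (|u (a + τ • ξ)| + |u (a - τ • ξ)|) * τ ^ (-(1+2*s)) + (2*|m|) * τ ^ (-(1+2*s)) := by ring
    _ ≤ (|u (a + τ • ξ)| + |u (a - τ • ξ)|) * (C / (1 + τ ^ (1+2*s)))
          + (2*|m|) * τ ^ (-(1+2*s)) := by
        have := mul_le_mul_of_nonneg_left key hA0; linarith
    _ = C * ((|u (a + τ • ξ)| + |u (a - τ • ξ)|) / (1 + τ ^ (1+2*s)))
          + (2*|m|) * τ ^ (-(1+2*s)) := by ring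


lemma aux_frame (N : ℕ) (hN : 1 ≤ N) {s Cs : ℝ} (hs : s ∈ Ioo (1/2 : ℝ) 1) (hCs : 0 < Cs)
    {u : E N → ℝ} (hcont : Continuous u) (hL1 : MemL1s N s u)
    (hsup : IsSupersolMinus N N s Cs (fun _ => 0) u)
    (m : ℝ) (hm : ∀ x, m ≤ u x)
    (a : E N) (ha : u a = m) {δ : ℝ} (hδ : 0 < δ) :
    ∃ ξ : Fin N → E N, Orthonormal ℝ ξ ∧ ∀ i, ∀ t : ℝ, δ < |t| → u (a + t • ξ i) = m := by
  classical
  set p : ℝ := -(1 + 2*s) with hp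
  set g : E N → ℝ → ℝ := fun ξ τ => u (a + τ • ξ) + u (a - τ • ξ) - 2*m with hg
  set J : E N → ℝ := fun ξ => ∫ τ in Ioi δ, g ξ τ * τ ^ p with hJ
  -- continuity of g ξ in τ
  have hgc : ∀ ξ : E N, Continuous (fun τ => g ξ τ) := by
    intro ξ
    exact ((hcont.comp (continuous_const.add ((continuous_id.smul continuous_const)))).add
      (hcont.comp (continuous_const.sub ((continuous_id.smul continuous_const))))).sub
      continuous_const
  have hg0 : ∀ ξ τ, 0 ≤ g ξ τ := by
    intro ξ τ; have := hm (a + τ • ξ); have := hm (a - τ • ξ); simp only [hg]; linarith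
  have hint : ∀ ξ : E N, ‖ξ‖ = 1 → IntegrableOn (fun τ => g ξ τ * τ ^ p) (Ioi δ) :=
    fun ξ hξ => aux_integrable N hs hcont hL1 a ξ hξ m hδ
  have hJ0 : ∀ ξ : E N, 0 ≤ J ξ := by
    intro ξ
    refine setIntegral_nonneg measurableSet_Ioi (fun τ hτ => ?_)
    exact mul_nonneg (hg0 ξ τ) (Real.rpow_nonneg (le_of_lt (lt_trans hδ hτ)) _)
  -- apply the supersolution property with constant test function
  have happly := hsup a δ hδ (fun _ => m) contDiffOn_const
    (fun y _ => by rw [ha]; simpa using hm y)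
  set c0 : ℝ := Cs * (δ * Cs) with hc0def
  have hc0 : 0 < c0 := by rw [hc0def]; positivity
  have hIt : ∀ ξ : E N, ItestEval N s Cs δ u (fun _ => m) ξ a = c0 * J ξ := by
    intro ξ
    simp only [ItestEval, ha]
    simp only [show m + m - 2*m = 0 from by ring, zero_mul, zero_add]
    rw [setIntegral_const, measureReal_def, Real.volume_Ioo, sub_zero, ENNReal.toReal_ofReal hδ.le,
      smul_eq_mul]
    simp only [hJ, hg, hp, hc0def]
    ring
  haveI : Nonempty {ξ : Fin N → E N // Orthonormal ℝ ξ} :=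
    ⟨⟨(EuclideanSpace.basisFun (Fin N) ℝ), (EuclideanSpace.basisFun (Fin N) ℝ).orthonormal⟩⟩
  have hInf : (⨅ ξ : {ξ : Fin N → E N // Orthonormal ℝ ξ}, ∑ i, c0 * J (ξ.1 i)) ≤ 0 := by
    have := happly
    simp only [add_zero] at this
    calc (⨅ ξ : {ξ : Fin N → E N // Orthonormal ℝ ξ}, ∑ i, c0 * J (ξ.1 i))
        = (⨅ ξ : {ξ : Fin N → E N // Orthonormal ℝ ξ},
            ∑ i, ItestEval N s Cs δ u (fun _ => m) (ξ.1 i) a) := by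
          exact iInf_congr (fun ξ => Finset.sum_congr rfl (fun i _ => (hIt (ξ.1 i)).symm))
      _ ≤ 0 := this
  -- frames with small sums
  have hξn : ∀ n : ℕ, ∃ ξ : {ξ : Fin N → E N // Orthonormal ℝ ξ},
      ∑ i, c0 * J (ξ.1 i) < 1/(n+1) := by
    intro n
    exact exists_lt_of_ciInf_lt (lt_of_le_of_lt hInf (by positivity))
  choose ξseq hξseq using hξn
  have hJi : ∀ n (i : Fin N), c0 * J ((ξseq n).1 i) < 1/(n+1) := by
    intro n i
    refine lt_of_le_of_lt ?_ (hξseq n)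
    exact Finset.single_le_sum (f := fun i => c0 * J ((ξseq n).1 i))
      (fun j _ => mul_nonneg hc0.le (hJ0 _)) (Finset.mem_univ i)
  -- compactness of the set of orthonormal frames
  set K : Set (Fin N → E N) := {ξ | Orthonormal ℝ ξ} with hK
  have hKclosed : IsClosed K := by
    have : K = ⋂ i, ⋂ j, {ξ : Fin N → E N |
        (inner ℝ (ξ i) (ξ j) : ℝ) = if i = j then 1 else 0} := by
      ext ξ
      simp only [hK, mem_setOf_eq, mem_iInter, orthonormal_iff_ite (𝕜 := ℝ)]
    rw [this]
    exact isClosed_iInter (fun i => isClosed_iInter (fun j =>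
      isClosed_eq ((continuous_apply i).inner (continuous_apply j)) continuous_const))
  have hKsub : K ⊆ Metric.closedBall 0 1 := by
    intro ξ hξ
    rw [mem_closedBall_zero_iff]
    refine (pi_norm_le_iff_of_nonneg zero_le_one).2 (fun i => le_of_eq (hξ.1 i))
  have hKcomp : IsCompact K :=
    (isCompact_closedBall (0 : Fin N → E N) 1).of_isClosed_subset hKclosed hKsub
  obtain ⟨ξstar, hξstarK, φ, hφmono, hφtend⟩ :=
    hKcomp.tendsto_subseq (fun n => (ξseq n).2)
  have hξstar : Orthonormal ℝ ξstar := hξstarK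
  refine ⟨ξstar, hξstar, ?_⟩
  -- key: g ξstar i vanishes on (δ, ∞)
  have hkey : ∀ (i : Fin N) (t : ℝ), δ < t → g (ξstar i) t = 0 := by
    intro i t ht
    have ht0 : 0 < t := lt_trans hδ ht
    set R : ℝ := t + 1 with hR
    have hδR : δ < R := by linarith
    -- the limit integral over Ioc δ R is zero
    have hIcz : (∫ τ in Ioc δ R, g (ξstar i) τ * τ ^ p) = 0 := by
      obtain ⟨M, hM⟩ := (isCompact_closedBall a R).exists_bound_of_continuousOn
        hcont.continuousOn
      have hM0 : 0 ≤ M := le_trans (norm_nonneg _)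
        (hM a (Metric.mem_closedBall_self (by linarith)))
      have hδp : (0:ℝ) < δ ^ p := Real.rpow_pos_of_pos hδ _
      -- dominated convergence
      have htendI : Filter.Tendsto
          (fun n => ∫ τ in Ioc δ R, g ((ξseq (φ n)).1 i) τ * τ ^ p)
          Filter.atTop (nhds (∫ τ in Ioc δ R, g (ξstar i) τ * τ ^ p)) := by
        refine tendsto_integral_of_dominated_convergence
          (fun _ => (4*M) * δ ^ p) (fun n => ?_) ?_ (fun n => ?_) ?_
        · exact ContinuousOn.aestronglyMeasurable
            (((hgc _).continuousOn).mul (fun τ hτ =>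
              (Real.continuousAt_rpow_const τ _
                (Or.inl (ne_of_gt (lt_trans hδ hτ.1)))).continuousWithinAt))
            measurableSet_Ioc
        · exact integrableOn_const measure_Ioc_lt_top.ne
        · rw [ae_restrict_iff' measurableSet_Ioc]
          refine ae_of_all _ (fun τ hτ => ?_)
          have hτ0 : 0 < τ := lt_trans hδ hτ.1
          have hτp : (0:ℝ) ≤ τ ^ p := Real.rpow_nonneg hτ0.le _
          have hnm : ‖(ξseq (φ n)).1 i‖ = 1 := (ξseq (φ n)).2.1 i
          have hball : ∀ w : E N, ‖w‖ = 1 → a + τ • w ∈ Metric.closedBall a R ∧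
              a - τ • w ∈ Metric.closedBall a R := by
            intro w hw
            constructor <;>
            · rw [Metric.mem_closedBall, dist_eq_norm]
              simp only [add_sub_cancel_left, sub_sub_cancel_left, norm_neg, norm_smul,
                Real.norm_eq_abs, hw, mul_one, abs_of_pos hτ0]
              linarith [hτ.2]
          obtain ⟨hb1, hb2⟩ := hball _ hnm
          have hgb : |g ((ξseq (φ n)).1 i) τ| ≤ 4*M := by
            have h1 := hM _ hb1
            have h2 := hM _ hb2
            have h3 : |m| ≤ M := by rw [← ha]; exact hM a (Metric.mem_closedBall_self (by linarith))
            rw [Real.norm_eq_abs] at h1 h2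
            have := le_abs_self m; have := neg_abs_le m
            have := le_abs_self (u (a + τ • (ξseq (φ n)).1 i))
            have := neg_abs_le (u (a + τ • (ξseq (φ n)).1 i))
            have := le_abs_self (u (a - τ • (ξseq (φ n)).1 i))
            have := neg_abs_le (u (a - τ • (ξseq (φ n)).1 i))
            simp only [hg]
            rw [abs_le]; constructor <;> linarith
          have hτδp : τ ^ p ≤ δ ^ p :=
            Real.rpow_le_rpow_of_nonpos hδ hτ.1.le (by rw [hp]; linarith [hs.1])
          calc ‖g ((ξseq (φ n)).1 i) τ * τ ^ p‖
              = |g ((ξseq (φ n)).1 i) τ| * τ ^ p := by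
                rw [norm_mul, Real.norm_eq_abs, Real.norm_eq_abs, abs_of_nonneg hτp]
            _ ≤ (4*M) * δ ^ p := by
                exact mul_le_mul hgb hτδp hτp (by positivity)
        · refine ae_of_all _ (fun τ => ?_)
          have hcomp : Filter.Tendsto (fun n => (ξseq (φ n)).1 i) Filter.atTop (nhds (ξstar i)) := by
            have := hφtend
            exact (tendsto_pi_nhds.1 this) i
          have hcw : Continuous (fun w : E N => (u (a + τ • w) + u (a - τ • w) - 2*m) * τ ^ p) := by
            exact (((hcont.comp (continuous_const.add (continuous_const_smul τ))).add
              (hcont.comp (continuous_const.sub (continuous_const_smul τ)))).sub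
              continuous_const).mul continuous_const
          exact (hcw.continuousAt.tendsto).comp hcomp
      have htend0 : Filter.Tendsto (fun n => 1/(c0 * ((φ n : ℝ)+1)))
          Filter.atTop (nhds 0) := by
        have h1 : Filter.Tendsto (fun n : ℕ => 1/((n:ℝ)+1)) Filter.atTop (nhds 0) :=
          tendsto_one_div_add_atTop_nhds_zero_nat
        have h2 : Filter.Tendsto (fun n : ℕ => 1/((φ n : ℝ)+1)) Filter.atTop (nhds 0) :=
          h1.comp hφmono.tendsto_atTop
        have h3 := h2.const_mul (1/c0)
        rw [mul_zero] at h3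
        refine h3.congr (fun n => ?_)
        field_simp
      have hle : ∀ n, (∫ τ in Ioc δ R, g ((ξseq (φ n)).1 i) τ * τ ^ p)
          ≤ 1/(c0 * ((φ n : ℝ)+1)) := by
        intro n
        have hnm : ‖(ξseq (φ n)).1 i‖ = 1 := (ξseq (φ n)).2.1 i
        have h1 : (∫ τ in Ioc δ R, g ((ξseq (φ n)).1 i) τ * τ ^ p) ≤ J ((ξseq (φ n)).1 i) := by
          refine setIntegral_mono_set (hint _ hnm) ?_ (HasSubset.Subset.eventuallyLE Ioc_subset_Ioi_self)
          refine Filter.Eventually.mono (ae_restrict_mem measurableSet_Ioi) (fun τ hτ => ?_)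
          simpa using mul_nonneg (hg0 _ τ) (Real.rpow_nonneg (le_of_lt (lt_trans hδ hτ)) _)
        have h2 := hJi (φ n) i
        rw [div_mul_eq_div_div_swap]
        rw [le_div_iff₀ hc0]
        calc (∫ τ in Ioc δ R, g ((ξseq (φ n)).1 i) τ * τ ^ p) * c0
            ≤ J ((ξseq (φ n)).1 i) * c0 := by
              exact mul_le_mul_of_nonneg_right h1 hc0.le
          _ = c0 * J ((ξseq (φ n)).1 i) := by ring
          _ ≤ 1/((φ n : ℝ)+1) := (hJi (φ n) i).le
      have hge : 0 ≤ ∫ τ in Ioc δ R, g (ξstar i) τ * τ ^ p := by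
        refine setIntegral_nonneg measurableSet_Ioc (fun τ hτ => ?_)
        exact mul_nonneg (hg0 _ τ) (Real.rpow_nonneg (le_of_lt (lt_trans hδ hτ.1)) _)
      have hle0 : (∫ τ in Ioc δ R, g (ξstar i) τ * τ ^ p) ≤ 0 :=
        le_of_tendsto_of_tendsto' htendI htend0 hle
      linarith
    -- positivity / continuity argument
    by_contra hne
    set h : ℝ → ℝ := fun τ => g (ξstar i) τ * τ ^ p with hh
    have hgt : 0 < h t := by
      have h1 : 0 < t ^ p := Real.rpow_pos_of_pos ht0 _
      have h2 : 0 ≤ g (ξstar i) t := hg0 _ t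
      rcases lt_or_eq_of_le h2 with hlt | heq
      · simp only [hh]; positivity
      · exact absurd heq.symm hne
    have hct : ContinuousAt h t :=
      ((hgc _).continuousAt).mul (Real.continuousAt_rpow_const t _ (Or.inl ht0.ne'))
    have hev : ∀ᶠ τ in nhds t, h t / 2 < h τ :=
      hct.eventually (eventually_gt_nhds (by linarith))
    obtain ⟨ε, hε, hball⟩ := Metric.eventually_nhds_iff.1 hev
    set η : ℝ := min (ε/2) (min ((t-δ)/2) (1/2)) with hη
    have hη0 : 0 < η := by
      refine lt_min (by linarith) (lt_min (by linarith) (by norm_num))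
    have hηε : η < ε := lt_of_le_of_lt (min_le_left _ _) (by linarith)
    have hηδ : η < t - δ := lt_of_le_of_lt (le_trans (min_le_right _ _) (min_le_left _ _)) (by linarith)
    have hη1 : η ≤ 1/2 := le_trans (min_le_right _ _) (min_le_right _ _)
    have hsub : Icc (t-η) (t+η) ⊆ Ioc δ R := by
      intro τ hτ
      constructor
      · linarith [hτ.1]
      · rw [hR]; linarith [hτ.2]
    have hIntIoc : IntegrableOn h (Ioc δ R) :=
      (hint _ (hξstar.1 i)).mono_set Ioc_subset_Ioi_self
    have hIntIcc : IntegrableOn h (Icc (t-η) (t+η)) := hIntIoc.mono_set hsub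
    have hmono : (∫ τ in Icc (t-η) (t+η), h τ) ≤ ∫ τ in Ioc δ R, h τ := by
      refine setIntegral_mono_set hIntIoc ?_ (HasSubset.Subset.eventuallyLE hsub)
      refine Filter.Eventually.mono (ae_restrict_mem measurableSet_Ioc) (fun τ hτ => ?_)
      simpa using mul_nonneg (hg0 _ τ) (Real.rpow_nonneg (le_of_lt (lt_trans hδ hτ.1)) _)
    have hconst : h t / 2 * (volume (Icc (t-η) (t+η))).toReal ≤ ∫ τ in Icc (t-η) (t+η), h τ := by
      refine le_trans (le_of_eq ?_) (setIntegral_ge_of_const_le (c := h t / 2) measurableSet_Icc (measure_Icc_lt_top).ne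
        (fun τ hτ => ?_) hIntIcc)
      · rw [measureReal_def, smul_eq_mul, mul_comm]
      refine (hball ?_).le
      rw [Real.dist_eq, abs_lt]
      constructor <;> [linarith [hτ.1, hηε]; linarith [hτ.2, hηε]]
    have hvol : (volume (Icc (t-η) (t+η))).toReal = 2*η := by
      rw [Real.volume_Icc, ENNReal.toReal_ofReal (by linarith)]
      ring
    rw [hvol] at hconst
    have : 0 < h t / 2 * (2*η) := by positivity
    rw [hIcz] at hmono
    linarith
  -- conclude
  intro i t ht
  rcases lt_trichotomy t 0 with htneg | htz | htpos
  · have h1 : δ < -t := by rwa [abs_of_neg htneg] at ht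
    have h2 := hkey i (-t) h1
    have h3 := hm (a + (-t) • ξstar i)
    have h4 := hm (a - (-t) • ξstar i)
    have h5 : a - (-t) • ξstar i = a + t • ξstar i := by
      rw [neg_smul, sub_neg_eq_add]
    simp only [hg] at h2
    rw [h5] at h2 h4
    linarith
  · exfalso; rw [htz, abs_zero] at ht; linarith
  · have h1 : δ < t := by rwa [abs_of_pos htpos] at ht
    have h2 := hkey i t h1
    have h3 := hm (a + t • ξstar i)
    have h4 := hm (a - t • ξstar i)
    simp only [hg] at h2
    linarith


theorem stmt_10 (N : ℕ) (hN : 1 ≤ N)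
    (s Cs : ℝ) (hs : s ∈ Ioo (1/2 : ℝ) 1) (hCs : 0 < Cs)
    (u : E N → ℝ) (hcont : Continuous u) (hL1 : MemL1s N s u)
    (hsup : IsSupersolMinus N N s Cs (fun _ => 0) u)
    (x₀ : E N) (hmin : ∀ x, u x₀ ≤ u x) :
    ∀ x y : E N, u x = u y := by
  classical
  suffices hall : ∀ z, u z = u x₀ by
    intro x y; rw [hall x, hall y]
  by_contra hcon
  push_neg at hcon
  obtain ⟨z, hz⟩ := hcon
  set A : Set (E N) := u ⁻¹' {u x₀} with hA
  have hAclosed : IsClosed A := isClosed_singleton.preimage hcont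
  have hAne : A.Nonempty := ⟨x₀, rfl⟩
  have hzA : z ∉ A := fun h => hz h
  set d : ℝ := Metric.infDist z A with hd
  have hd0 : 0 < d := (hAclosed.notMem_iff_infDist_pos hAne).1 hzA
  obtain ⟨a, haA, hda⟩ := hAclosed.exists_infDist_eq_dist hAne z
  have ha : u a = u x₀ := haA
  have hNpos : (0:ℝ) < N := by exact_mod_cast hN
  have hsqrtN : (0:ℝ) < Real.sqrt N := Real.sqrt_pos.2 hNpos
  set δ : ℝ := d / (2 * Real.sqrt N) with hδdef
  have hδ0 : 0 < δ := by positivity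
  obtain ⟨ξ, hON, hline⟩ := aux_frame N hN hs hCs hcont hL1 hsup (u x₀) hmin a ha hδ0
  -- ξ is an orthonormal basis
  haveI : Nonempty (Fin N) := Fin.pos_iff_nonempty.1 hN
  have hcard : Fintype.card (Fin N) = Module.finrank ℝ (E N) := by
    simp [finrank_euclideanSpace_fin]
  have hspan : ⊤ ≤ Submodule.span ℝ (Set.range ξ) :=
    (hON.linearIndependent.span_eq_top_of_card_eq_finrank hcard).ge
  set b : OrthonormalBasis (Fin N) ℝ (E N) := OrthonormalBasis.mk hON hspan with hb
  have hbcoe : ∀ i, b i = ξ i := fun i => by rw [hb, OrthonormalBasis.coe_mk]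
  set v : E N := z - a with hv
  have hvd : ‖v‖ = d := by
    rw [hv, ← dist_eq_norm, hd, hda]
  -- Parseval
  have hpars : ∑ i, (inner ℝ v (ξ i) : ℝ) ^ 2 = d ^ 2 := by
    have h1 := b.sum_inner_mul_inner v v
    have h2 : ∀ i, (inner ℝ v (b i) : ℝ) * (inner ℝ (b i) v : ℝ) = (inner ℝ v (ξ i) : ℝ) ^ 2 := by
      intro i
      rw [hbcoe i, real_inner_comm (ξ i) v]; ring
    rw [Finset.sum_congr rfl (fun i _ => h2 i)] at h1
    rw [h1, real_inner_self_eq_norm_sq, hvd]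
  -- some coordinate is large
  have hex : ∃ i : Fin N, d^2 / N ≤ (inner ℝ v (ξ i) : ℝ) ^ 2 := by
    by_contra hno
    push_neg at hno
    have hsum : ∑ i, (inner ℝ v (ξ i) : ℝ) ^ 2 < ∑ _i : Fin N, d^2 / N :=
      Finset.sum_lt_sum_of_nonempty Finset.univ_nonempty (fun i _ => hno i)
    rw [Finset.sum_const, Finset.card_univ, Fintype.card_fin, nsmul_eq_mul] at hsum
    rw [hpars] at hsum
    rw [mul_div_cancel₀ _ (ne_of_gt hNpos)] at hsum
    exact lt_irrefl _ hsum
  obtain ⟨i, hi⟩ := hex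
  set t : ℝ := inner ℝ v (ξ i) with ht
  have htabs : d / Real.sqrt N ≤ |t| := by
    have h1 : (d / Real.sqrt N) ^ 2 ≤ |t| ^ 2 := by
      rw [sq_abs, div_pow, Real.sq_sqrt hNpos.le]
      exact hi
    have h2 : (0:ℝ) ≤ d / Real.sqrt N := by positivity
    exact (pow_le_pow_iff_left₀ h2 (abs_nonneg t) (two_ne_zero)).1 h1
  have hδt : δ < |t| := by
    have : δ < d / Real.sqrt N := by
      rw [hδdef]
      rw [div_lt_div_iff₀ (by positivity) hsqrtN]
      nlinarith
    linarith
  have ht0 : t ≠ 0 := by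
    intro h0
    rw [h0, abs_zero] at hδt
    linarith
  -- the point p
  set P : E N := a + t • ξ i with hP
  have hPA : u P = u x₀ := hline i t hδt
  have hdist : dist z P < d := by
    have hzP : z - P = v - t • ξ i := by
      rw [hP, hv]; abel
    have hnorm2 : ‖z - P‖ ^ 2 = d ^ 2 - t ^ 2 := by
      rw [hzP, norm_sub_sq_real, hvd, real_inner_smul_right, ← ht,
        norm_smul, Real.norm_eq_abs, hON.1 i, mul_one, sq_abs]
      ring
    have h1 : ‖z - P‖ ^ 2 < d ^ 2 := by
      rw [hnorm2]
      have : 0 < t ^ 2 := by positivity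
      linarith
    rw [dist_eq_norm]
    exact lt_of_pow_lt_pow_left₀ 2 hd0.le h1
  have hle : d ≤ dist z P := by
    rw [hd]
    exact Metric.infDist_le_dist_of_mem hPA
  linarith
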